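/- arXiv:2504.00314 — 2 statements merged into one kernel-verified Lean document; each statement's English description precedes it below -/
import Mathlib

section
/- Let d be a positive even integer. For each positive integer n, there exists a finitely supported sequence ε : ℕ → ℕ satisfying the Chung–Graham rule of expansion for even interval d such that n = Σ_{k=1}^∞ ε_k · F_{2+d(k-1)}. -/
/-- Lucas sequence: K 1 = 1, K 2 = 3, K (k+2) = K (k+1) + K k. -/
def lucas : ℕ → ℕ
  | 0 => 2
  | 1 => 1
  | n + 2 => lucas (n + 1) + lucas n

/-- The Chung–Graham rule of expansion for even interval `d`,
with `A = lucas d - 1` and `B = Nat.fib (2 + d) - 1`.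
Sequences are indexed from 1 (so `ε 0 = 0`) and finitely supported. -/
def CGRule (d : ℕ) (ε : ℕ → ℕ) : Prop :=
  ε 0 = 0 ∧
  {k | ε k ≠ 0}.Finite ∧
  ε 1 ≤ Nat.fib (2 + d) - 1 ∧
  (∀ k, 2 ≤ k → ε k ≤ lucas d - 1) ∧
  (∀ m, 2 ≤ m → ε m = lucas d - 1 →
    (∀ k, 2 ≤ k → k ≤ m - 1 → ε k = lucas d - 1 - 1) →
    ε 1 < Nat.fib (2 + d) - 1) ∧
  (∀ k j, 2 ≤ k → k < j → ε k = lucas d - 1 → ε j = lucas d - 1 →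
    ∃ c, k < c ∧ c < j ∧ ε c ≤ lucas d - 1 - 2)

/-- Lexicographic-from-the-right strict order on coefficient sequences. -/
def CGlt (ε τ : ℕ → ℕ) : Prop :=
  ∃ ℓ, ε ℓ < τ ℓ ∧ ∀ k, ℓ < k → ε k = τ k

/-! For even `d` the weights `w k = F (2 + d (k - 1))` satisfy `w (k + 1) + w (k - 1) = K_d * w k`
(the identity `F (x + d) + (-1)^d F (x - d) = K_d F x`), so the greedy expansion in them has digits
`ε_k < K_d` for `k ≥ 2` and `ε_1 < w 2`. Rules (2) and (3) come from one invariant: call the remainder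
`r` left for the positions `≤ k` *blocked* if `r + w k < w (k + 1)`. A digit `K_d - 1` at position `j`
leaves a blocked remainder below `j`, a digit `≥ K_d - 2` passes the block down, and a blocked position
carries a digit with `(ε_k + 1) w k < w (k + 1)`, i.e. `ε_k < K_d - 1`, resp. `ε_1 < w 2 - 1`. -/

open Nat Finset

lemma lucas_pos : ∀ n, 0 < lucas n
  | 0 => by decide
  | 1 => by decide
  | n + 2 => by rw [lucas]; exact Nat.add_pos_right _ (lucas_pos n)

lemma two_le_lucas_add_two (n : ℕ) : 2 ≤ lucas (n + 2) := by
  rw [lucas]; have := lucas_pos n; have := lucas_pos (n + 1); omega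

lemma natCast_lucas : ∀ n : ℕ, (lucas n : ℤ) = Int.fib (n - 1) + Int.fib (n + 1)
  | 0 => by decide
  | 1 => by decide
  | n + 2 => by
    rw [lucas, Nat.cast_add, natCast_lucas (n + 1), natCast_lucas n]
    push_cast
    have h1 := Int.fib_add_two ((n : ℤ) - 1)
    have h2 := Int.fib_add_two ((n : ℤ) + 1)
    ring_nf at h1 h2 ⊢
    linarith

lemma Int.fib_add_add_fib_sub_of_even (x : ℤ) {d : ℤ} (hd : Even d) :
    Int.fib (x + d) + Int.fib (x - d) = (Int.fib (d - 1) + Int.fib (d + 1)) * Int.fib x := by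
  have hodd : ¬Even (d - 1) := by rw [Int.even_sub_one]; exact not_not.mpr hd
  rw [sub_eq_add_neg x d, Int.fib_add x d, Int.fib_add x (-d), Int.fib_neg, if_pos hd,
    show -d + 1 = -(d - 1) by ring, Int.fib_neg, if_neg hodd]
  ring

lemma fib_add_two_mul_add_fib_of_even {d : ℕ} (hd : Even d) (m : ℕ) :
    fib (m + 2 * d) + fib m = lucas d * fib (m + d) := by
  have h := Int.fib_add_add_fib_sub_of_even ((m + d : ℕ) : ℤ) (d := d) (by exact_mod_cast hd)
  rw [← natCast_lucas, show ((m + d : ℕ) : ℤ) + d = ((m + 2 * d : ℕ) : ℤ) by push_cast; ring,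
    show ((m + d : ℕ) : ℤ) - d = m by push_cast; ring] at h
  simp only [Int.fib_natCast] at h
  exact_mod_cast h

/-- `greedy w L n k` is the `k`-th digit of the greedy expansion of `n` in the weights
`w 1, …, w L`; it vanishes outside `1 ≤ k ≤ L`. -/
def greedy (w : ℕ → ℕ) : ℕ → ℕ → ℕ → ℕ
  | 0, _ => 0
  | L + 1, n => Function.update (greedy w L (n % w (L + 1))) (L + 1) (n / w (L + 1))

namespace greedy

variable {w : ℕ → ℕ} {c L n : ℕ}

@[simp] lemma succ_self : greedy w (L + 1) n (L + 1) = n / w (L + 1) := by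
  simp [greedy]

lemma succ_of_le {k : ℕ} (hk : k ≤ L) :
    greedy w (L + 1) n k = greedy w L (n % w (L + 1)) k := by
  simp [greedy, Function.update_of_ne (show k ≠ L + 1 by omega)]

lemma apply_of_lt {k : ℕ} (hk : L < k) : greedy w L n k = 0 := by
  induction L generalizing n with
  | zero => rfl
  | succ L ih =>
    simp [greedy, Function.update_of_ne (show k ≠ L + 1 by omega), ih (show L < k by omega)]

lemma le_of_ne_zero {k : ℕ} (hk : greedy w L n k ≠ 0) : k ≤ L :=
  not_lt.mp fun h => hk (apply_of_lt h)

@[simp] lemma apply_zero : greedy w L n 0 = 0 := by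
  induction L generalizing n with
  | zero => rfl
  | succ L ih => rw [succ_of_le (Nat.zero_le L), ih]

lemma sum_mul_eq (hw1 : w 1 = 1) (hL : 1 ≤ L) :
    ∑ k ∈ range (L + 1), greedy w L n k * w k = n := by
  induction L, hL using Nat.le_induction generalizing n with
  | base => simp [sum_range_succ, hw1]
  | succ L hL ih =>
    rw [sum_range_succ, succ_self, sum_congr rfl fun k hk => by
      rw [succ_of_le (Nat.lt_succ_iff.mp (mem_range.mp hk))], ih]
    exact Nat.mod_add_div' n (w (L + 1))

lemma finsum_mul_eq (hw1 : w 1 = 1) (hL : 1 ≤ L) : ∑ᶠ k, greedy w L n k * w k = n := by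
  rw [finsum_eq_sum_of_support_subset _ fun k hk => ?_, sum_mul_eq hw1 hL]
  rw [coe_range, Set.mem_Iio, Nat.lt_succ_iff]
  exact le_of_ne_zero (left_ne_zero_of_mul hk)

lemma exists_eq_on_le (hw : ∀ k, 0 < w k) (hn : n < w (L + 1)) {j : ℕ} (hj : j ≤ L) :
    ∃ r < w (j + 1), ∀ k ≤ j, greedy w L n k = greedy w j r k := by
  induction L, hj using Nat.le_induction generalizing n with
  | base => exact ⟨n, hn, fun _ _ => rfl⟩
  | succ L hjL ih =>
    obtain ⟨r, hr, hrk⟩ := ih (Nat.mod_lt n (hw (L + 1)))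
    exact ⟨r, hr, fun k hk => by rw [succ_of_le (hk.trans hjL), hrk k hk]⟩

lemma apply_one_lt (hw : ∀ k, 0 < w k) (hw1 : w 1 = 1) (hn : n < w (L + 1)) :
    greedy w L n 1 < w 2 := by
  rcases Nat.eq_zero_or_pos L with rfl | hL
  · rw [apply_of_lt zero_lt_one]; exact hw 2
  obtain ⟨r, hr, hrk⟩ := exists_eq_on_le hw hn (show 1 ≤ L from hL)
  rw [hrk 1 le_rfl, show greedy w 1 r 1 = r / w 1 from succ_self, hw1, Nat.div_one]
  exact hr

variable (hrec : ∀ i, 1 ≤ i → w (i + 2) + w i = c * w (i + 1))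
include hrec

lemma apply_le_pred (hw : ∀ k, 0 < w k) (hn : n < w (L + 1)) {k : ℕ} (hk : 2 ≤ k) :
    greedy w L n k ≤ c - 1 := by
  rcases lt_or_ge L k with hkL | hkL
  · rw [apply_of_lt hkL]; exact Nat.zero_le _
  obtain ⟨r, hr, hrk⟩ := exists_eq_on_le hw hn hkL
  obtain ⟨i, rfl⟩ : ∃ i, k = i + 1 := ⟨k - 1, by omega⟩
  have hrc : r < c * w (i + 1) := by
    have hr' : r < w (i + 2) := hr
    have := hrec i (by omega)
    omega
  rw [hrk _ le_rfl, succ_self]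
  have := (Nat.div_lt_iff_lt_mul (hw (i + 1))).mpr hrc
  omega

lemma succ_mul_lt_of_large_digits (hn : n + w L < w (L + 1)) {k : ℕ} (hk : 1 ≤ k)
    (hkL : k ≤ L) (hdig : ∀ i, k < i → i ≤ L → c - 2 ≤ greedy w L n i) :
    (greedy w L n k + 1) * w k < w (k + 1) := by
  induction L generalizing n with
  | zero => omega
  | succ L ih =>
    rcases hkL.eq_or_lt with rfl | hkL
    · rw [succ_self, add_one_mul]
      exact (Nat.add_le_add_right (Nat.div_mul_le_self n _) _).trans_lt hn
    have hkL : k ≤ L := Nat.lt_succ_iff.mp hkL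
    rw [succ_of_le hkL]
    refine ih ?_ hkL fun i hki hiL => ?_
    · have hq : c ≤ n / w (L + 1) + 2 := by
        have := hdig (L + 1) (by omega) le_rfl
        rw [succ_self] at this
        omega
      have hsplit := Nat.div_add_mod n (w (L + 1))
      have hr : w (L + 2) + w L = c * w (L + 1) := hrec L (by omega)
      have := Nat.mul_le_mul_right (w (L + 1)) hq
      have hn' : n + w (L + 1) < w (L + 2) := hn
      linarith
    · rw [← succ_of_le hiL]
      exact hdig i hki (by omega)

lemma succ_mul_lt_of_max_digit (hw : ∀ k, 0 < w k) (hn : n < w (L + 1)) {k j : ℕ}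
    (hk : 1 ≤ k) (hkj : k < j) (hjL : j ≤ L) (hj : c - 1 ≤ greedy w L n j)
    (hdig : ∀ i, k < i → i < j → c - 2 ≤ greedy w L n i) :
    (greedy w L n k + 1) * w k < w (k + 1) := by
  obtain ⟨r, hr, hrk⟩ := exists_eq_on_le hw hn hjL
  obtain ⟨j, rfl⟩ : ∃ i, j = i + 1 := ⟨j - 1, by omega⟩
  have hkj' : k ≤ j := by omega
  rw [hrk _ le_rfl, succ_self] at hj
  rw [hrk k (by omega), succ_of_le hkj']
  refine succ_mul_lt_of_large_digits hrec ?_ hk hkj' fun i hki hij => ?_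
  · have hsplit := Nat.div_add_mod r (w (j + 1))
    have hrec' : w (j + 2) + w j = c * w (j + 1) := hrec j (by omega)
    have := Nat.mul_le_mul_right (w (j + 1)) (show c ≤ r / w (j + 1) + 1 by omega)
    have hr' : r < w (j + 2) := hr
    linarith
  · rw [← succ_of_le hij, ← hrk i (by omega)]
    exact hdig i hki (by omega)

lemma apply_one_lt_pred_of_max_run (hw : ∀ k, 0 < w k) (hw1 : w 1 = 1) (hc : 2 ≤ c)
    (hn : n < w (L + 1)) {m : ℕ} (hm : 2 ≤ m) (hmax : greedy w L n m = c - 1)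
    (hrun : ∀ k, 2 ≤ k → k ≤ m - 1 → greedy w L n k = c - 1 - 1) :
    greedy w L n 1 < w 2 - 1 := by
  have hmL : m ≤ L := le_of_ne_zero (show greedy w L n m ≠ 0 by omega)
  have : (greedy w L n 1 + 1) * w 1 < w 2 :=
    succ_mul_lt_of_max_digit hrec hw hn le_rfl hm hmL hmax.ge fun i hi him => by
      rw [hrun i hi (by omega)]; omega
  rw [hw1, mul_one] at this
  omega

lemma exists_small_digit_between (hw : ∀ k, 0 < w k) (hc : 2 ≤ c) (hn : n < w (L + 1))
    {k j : ℕ} (hk : 2 ≤ k) (hkj : k < j) (hmaxk : greedy w L n k = c - 1)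
    (hmaxj : greedy w L n j = c - 1) : ∃ i, k < i ∧ i < j ∧ greedy w L n i ≤ c - 1 - 2 := by
  by_contra! hbig
  have hjL : j ≤ L := le_of_ne_zero (show greedy w L n j ≠ 0 by omega)
  obtain ⟨k, rfl⟩ : ∃ i, k = i + 1 := ⟨k - 1, by omega⟩
  have hblock : (greedy w L n (k + 1) + 1) * w (k + 1) < w (k + 2) :=
    succ_mul_lt_of_max_digit hrec hw hn (by omega) hkj hjL hmaxj.ge fun i hki hij => by
      have := hbig i hki hij; omega
  rw [hmaxk, Nat.sub_add_cancel (by omega)] at hblock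
  have := hrec k (by omega)
  omega

end greedy

def cgWeight (d k : ℕ) : ℕ := fib (2 + d * (k - 1))

section cgWeight

variable {d : ℕ}

lemma cgWeight_pos (k : ℕ) : 0 < cgWeight d k := fib_pos.mpr (by omega)

lemma cgWeight_one : cgWeight d 1 = 1 := by simp [cgWeight]

lemma cgWeight_two : cgWeight d 2 = fib (2 + d) := by simp [cgWeight]

lemma cgWeight_add_two_add_cgWeight (hd : Even d) (i : ℕ) (hi : 1 ≤ i) :
    cgWeight d (i + 2) + cgWeight d i = lucas d * cgWeight d (i + 1) := by
  obtain ⟨j, rfl⟩ : ∃ j, i = j + 1 := ⟨i - 1, by omega⟩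
  have h := fib_add_two_mul_add_fib_of_even hd (2 + d * j)
  rw [show 2 + d * j + 2 * d = 2 + d * (j + 1 + 2 - 1) by simp; ring,
    show 2 + d * j + d = 2 + d * (j + 1 + 1 - 1) by simp; ring] at h
  simpa [cgWeight] using h

lemma lt_cgWeight_add_two (hd : 0 < d) (n : ℕ) : n < cgWeight d (n + 2) :=
  calc n < n + 1 := n.lt_succ_self
    _ ≤ fib (n + 1 + 2) := fib_add_two_strictMono.id_le (n + 1)
    _ ≤ cgWeight d (n + 2) := fib_mono (by rw [show n + 2 - 1 = n + 1 by omega]; nlinarith)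

lemma cgRule_greedy (hd : 0 < d) (hde : Even d) {L n : ℕ} (hn : n < cgWeight d (L + 1)) :
    CGRule d (greedy (cgWeight d) L n) := by
  have hrec := cgWeight_add_two_add_cgWeight hde
  have hc : 2 ≤ lucas d := by
    obtain ⟨e, rfl⟩ : ∃ e, d = e + 2 := ⟨d - 2, by obtain ⟨r, rfl⟩ := hde; omega⟩
    exact two_le_lucas_add_two e
  have h1 := greedy.apply_one_lt cgWeight_pos cgWeight_one hn
  rw [cgWeight_two] at h1
  refine ⟨greedy.apply_zero, (Set.finite_Iic L).subset fun k hk => greedy.le_of_ne_zero hk,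
    by omega, fun k hk => greedy.apply_le_pred hrec cgWeight_pos hn hk, fun m hm hmax hrun => ?_,
    fun k j hk hkj => greedy.exists_small_digit_between hrec cgWeight_pos hc hn hk hkj⟩
  rw [← cgWeight_two]
  exact greedy.apply_one_lt_pred_of_max_run hrec cgWeight_pos cgWeight_one hc hn hm hmax hrun

end cgWeight

theorem stmt_8_general (d : ℕ) (hd : 0 < d) (hde : Even d) (n : ℕ) :
    ∃ ε : ℕ → ℕ, CGRule d ε ∧ n = ∑ᶠ k, ε k * Nat.fib (2 + d * (k - 1)) :=
  ⟨greedy (cgWeight d) (n + 1) n, cgRule_greedy hd hde (lt_cgWeight_add_two hd n),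
    (greedy.finsum_mul_eq cgWeight_one (Nat.le_add_left 1 n)).symm⟩

theorem stmt_8 (d : ℕ) (hd : 0 < d) (hde : Even d) (n : ℕ) (hn : 1 ≤ n) :
    ∃ ε : ℕ → ℕ, CGRule d ε ∧ n = ∑ᶠ k, ε k * Nat.fib (2 + d * (k - 1)) :=
  stmt_8_general d hd hde n
end

section
/- Let d be a positive even integer. For each positive integer n, there is a unique finitely supported sequence ε : ℕ → ℕ satisfying the Chung–Graham rule of expansion for even interval d such that n = Σ_{k=1}^∞ ε_k · F_{2+d(k-1)}. -/
lemma lucas_add_fib (n : ℕ) : lucas n + Nat.fib n = 2 * Nat.fib (n+1) := by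
  induction n using Nat.twoStepInduction with
  | zero => simp [lucas]
  | one => simp [lucas]
  | more n ih1 ih2 =>
      have h1 := Nat.fib_add_two (n := n)
      have h2 := Nat.fib_add_two (n := n+1)
      rw [lucas] at *
      ring_nf at ih1 ih2 h1 h2 ⊢
      omega

lemma cassini (n : ℕ) : Nat.fib (2*n) * Nat.fib (2*n+2) + 1 = Nat.fib (2*n+1)^2 ∧
    Nat.fib (2*n+1) * Nat.fib (2*n+3) = Nat.fib (2*n+2)^2 + 1 := by
  induction n with
  | zero => simp [Nat.fib]
  | succ n ih =>
      obtain ⟨a, b⟩ := ih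
      have c : Nat.fib (2*n+2) * Nat.fib (2*n+4) + 1 = Nat.fib (2*n+3)^2 := by
        have h := Nat.fib_add_two (n := 2*n+2)
        have h2 := Nat.fib_add_two (n := 2*n+1)
        nlinarith [h, h2, b]
      constructor
      · have : 2*(n+1) = 2*n+2 := by ring
        rw [this]; convert c using 3 <;> ring
      · have h := Nat.fib_add_two (n := 2*n+3)
        have h2 := Nat.fib_add_two (n := 2*n+2)
        have goal : Nat.fib (2*n+3) * Nat.fib (2*n+5) = Nat.fib (2*n+4)^2 + 1 := by
          nlinarith [h, h2, c]
        convert goal using 3 <;> ring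

lemma keyL {d : ℕ} (hde : Even d) (j : ℕ) :
    lucas d * Nat.fib (j + d) = Nat.fib (j + 2*d) + Nat.fib j := by
  induction j using Nat.twoStepInduction with
  | zero =>
      -- lucas d * fib d = fib (2d)
      have h := Nat.fib_two_mul d
      have h1 := lucas_add_fib d
      simp only [Nat.zero_add, Nat.fib_zero, Nat.add_zero]
      rw [h, ← h1, Nat.add_sub_cancel, Nat.mul_comm]
  | one =>
      obtain ⟨e, he⟩ := hde
      have hd2 : d = 2*e := by omega
      subst hd2
      have h := Nat.fib_two_mul_add_one (2*e)  -- careful: fib(2*(2e)+1)?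
      -- fib (1 + 2*(2e)) = fib (2e+1)^2 + fib(2e)^2? no: fib_two_mul_add_one n : fib(2n+1) = fib(n+1)^2 + fib n ^2, with n = 2e
      have hc := (cassini e).1
      have h1 := lucas_add_fib (2*e)
      have hf := Nat.fib_add_two (n := 2*e)
      have h' : Nat.fib (1 + 2*(2*e)) = Nat.fib (2*e+1)^2 + Nat.fib (2*e)^2 := by
        rw [show 1 + 2*(2*e) = 2*(2*e)+1 by ring, h]
      rw [h', Nat.fib_one, show 1 + 2*e = 2*e + 1 by ring]
      nlinarith [h1, hc, hf]
  | more j ih1 ih2 =>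
      have h1 := Nat.fib_add_two (n := j + d)
      have h2 := Nat.fib_add_two (n := j + 2*d)
      have h3 := Nat.fib_add_two (n := j)
      rw [show j + 2 + d = (j + d) + 2 by ring, h1,
          show j + 2 + 2*d = (j + 2*d) + 2 by ring, h2, h3, Nat.mul_add]
      ring_nf at ih1 ih2 h3 ⊢
      omega

def bb (d k : ℕ) : ℕ := Nat.fib (2 + d * (k - 1))

lemma bb_pos (d k : ℕ) : 0 < bb d k := Nat.fib_pos.2 (by omega)

lemma bb_one (d : ℕ) : bb d 1 = 1 := by simp [bb]

lemma bb_two (d : ℕ) : bb d 2 = Nat.fib (2 + d) := by simp [bb]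

lemma bb_mono (d : ℕ) {k j : ℕ} (h : k ≤ j) : bb d k ≤ bb d j :=
  Nat.fib_mono (Nat.add_le_add_left (Nat.mul_le_mul le_rfl (by omega)) 2)

lemma bb_rec {d : ℕ} (hde : Even d) {m : ℕ} (hm : 1 ≤ m) :
    lucas d * bb d (m+1) = bb d (m+2) + bb d m := by
  have h := keyL hde (2 + d * (m-1))
  have e1 : 2 + d * (m-1) + d = 2 + d * ((m+1) - 1) := by
    have : m - 1 + 1 = m := by omega
    calc 2 + d * (m-1) + d = 2 + d * ((m-1)+1) := by ring
    _ = 2 + d * ((m+1)-1) := by rw [this]; simp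
  have e2 : 2 + d * (m-1) + 2*d = 2 + d * ((m+2) - 1) := by
    have : m - 1 + 2 = m + 1 := by omega
    calc 2 + d * (m-1) + 2*d = 2 + d * ((m-1)+2) := by ring
    _ = 2 + d * ((m+2)-1) := by rw [this]; simp
  have e3 : 2 + d * (m - 1) = 2 + d * (m - 1) := rfl
  unfold bb
  rw [← e1, ← e2, h]

lemma hL3 {d : ℕ} (hd : 2 ≤ d) : 3 ≤ lucas d := by
  obtain ⟨e, rfl⟩ : ∃ e, d = e + 2 := ⟨d - 2, by omega⟩
  have h1 := lucas_add_fib (e+2)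
  have h2 := Nat.fib_add_two (n := e+1)
  have h3 := Nat.fib_pos.2 (show 0 < e + 1 by omega)
  have h4 := Nat.fib_pos.2 (show 0 < e + 2 by omega)
  ring_nf at h1 h2 h3 h4 ⊢
  omega

lemma hF3 {d : ℕ} (hd : 2 ≤ d) : 3 ≤ Nat.fib (2 + d) := by
  calc 3 = Nat.fib 4 := rfl
  _ ≤ Nat.fib (2 + d) := Nat.fib_mono (by omega)

/-- The key identity E. -/
lemma Ekey {d : ℕ} (hde : Even d) (hd : 0 < d) {m : ℕ} (hm : 2 ≤ m) :
    lucas d * bb d m + lucas d * (∑ i ∈ Finset.Ioc 1 (m-1), bb d i) + Nat.fib (2+d)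
      = bb d (m+1) + bb d m + 2 * (∑ i ∈ Finset.Ioc 1 (m-1), bb d i) + 1 := by
  induction m, hm using Nat.le_induction with
  | base =>
      simp only [show (2:ℕ) - 1 = 1 from rfl, Finset.Ioc_self, Finset.sum_empty]
      have h := keyL hde 2
      have : bb d 3 = Nat.fib (2 + 2*d) := by unfold bb; ring_nf
      rw [bb_two, this]
      rw [show (2:ℕ) + 2*d = 2 + 2*d from rfl] at h
      have : Nat.fib 2 = 1 := rfl
      omega
  | succ m hm ih =>
      have hsplit : ∑ i ∈ Finset.Ioc 1 (m+1-1), bb d i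
          = (∑ i ∈ Finset.Ioc 1 (m-1), bb d i) + bb d m := by
        have h1 : m + 1 - 1 = (m-1) + 1 := by omega
        have h2 : m - 1 + 1 = m := by omega
        rw [h1, Finset.sum_Ioc_succ_top (by omega), h2]
      have hrec := bb_rec hde (show 1 ≤ m by omega)
      rw [hsplit]
      ring_nf at ih hrec ⊢
      omega

/-- truncation preserves the rule -/
lemma CGRule.trunc {d : ℕ} (hd2 : 2 ≤ d) {ε : ℕ → ℕ} (h : CGRule d ε) (t : ℕ) :
    CGRule d (fun k => if k ≤ t then ε k else 0) := by
  obtain ⟨h0, hfin, h1, h4, h2, h3⟩ := h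
  refine ⟨by simp [h0], ?_, ?_, ?_, ?_, ?_⟩
  · apply hfin.subset
    intro k hk
    simp only [Set.mem_setOf_eq] at hk ⊢
    by_cases hkt : k ≤ t <;> simp [hkt] at hk ⊢
    exact hk
  · by_cases h1t : 1 ≤ t <;> simp [h1t, h1]
  · intro k hk
    by_cases hkt : k ≤ t <;> simp [hkt, h4 k hk]
  · intro m hm hmA hall
    by_cases hmt : m ≤ t
    · simp only [hmt, if_pos] at hmA
      have := h2 m hm hmA (fun k hk2 hkm => by
        have hkt : k ≤ t := by omega
        have := hall k hk2 hkm
        simpa [hkt] using this)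
      by_cases h1t : 1 ≤ t <;> simp [h1t]
      · exact this
      · have := hF3 (d := d) hd2
        omega
    · exfalso
      simp [hmt] at hmA
      have := hL3 (d := d) hd2
      omega
  · intro k j hk hkj hkA hjA
    by_cases hkt : k ≤ t
    · by_cases hjt : j ≤ t
      · simp only [hkt, hjt, if_pos] at hkA hjA
        obtain ⟨c, hc1, hc2, hc3⟩ := h3 k j hk hkj hkA hjA
        exact ⟨c, hc1, hc2, by simp [show c ≤ t by omega, hc3]⟩
      · exfalso; simp [hjt] at hjA
        have := hL3 (d := d) hd2; omega
    · exfalso; simp [hkt] at hkA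
      have := hL3 (d := d) hd2; omega

lemma sum_split (f : ℕ → ℕ) {a b c : ℕ} (h1 : a ≤ b) (h2 : b ≤ c) :
    ∑ i ∈ Finset.Ioc a c, f i = ∑ i ∈ Finset.Ioc a b, f i + ∑ i ∈ Finset.Ioc b c, f i :=
  (Finset.sum_Ioc_consecutive _ h1 h2).symm

lemma Ioc_single (f : ℕ → ℕ) {b : ℕ} (hb : 1 ≤ b) : ∑ i ∈ Finset.Ioc (b-1) b, f i = f b := by
  have : Finset.Ioc (b-1) b = {b} := by ext x; simp; omega
  simp [this]

set_option maxHeartbeats 1000000 in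
lemma lemmaM {d : ℕ} (hde : Even d) (hd2 : 2 ≤ d) :
    ∀ m : ℕ, ∀ ε : ℕ → ℕ, CGRule d ε → (∀ k, m < k → ε k = 0) →
    (∑ k ∈ Finset.Ioc 0 m, ε k * bb d k) + 1 ≤ bb d (m+1) := by
  intro m
  induction m using Nat.strong_induction_on with
  | _ m IH =>
  intro ε hε hsupp
  have hL := hL3 hd2
  have hF := hF3 hd2
  obtain ⟨h0, hfin, h1, h4, h2, h3⟩ := hε
  -- prefix bound from IH + truncation
  have prefix_le : ∀ t, t < m → (∑ k ∈ Finset.Ioc 0 t, ε k * bb d k) + 1 ≤ bb d (t+1) := by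
    intro t ht
    have htr := CGRule.trunc hd2 ⟨h0, hfin, h1, h4, h2, h3⟩ t
    have hIH := IH t ht _ htr (fun k hk => by simp [show ¬ k ≤ t by omega])
    have heq : (∑ k ∈ Finset.Ioc 0 t, (if k ≤ t then ε k else 0) * bb d k)
        = ∑ k ∈ Finset.Ioc 0 t, ε k * bb d k := by
      refine Finset.sum_congr rfl (fun k hk => ?_)
      simp only [Finset.mem_Ioc] at hk
      simp [show k ≤ t by omega]
    rwa [heq] at hIH
  rcases Nat.lt_or_ge m 2 with hm2 | hm2
  · interval_cases m
    · simp only [Finset.Ioc_self, Finset.sum_empty, Nat.zero_add]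
      exact bb_pos d 1
    · have : Finset.Ioc 0 1 = {1} := by ext x; simp only [Finset.mem_Ioc, Finset.mem_singleton]; omega
      rw [this]
      simp [bb_one, bb_two]
      omega
  -- main case m ≥ 2
  obtain ⟨t3, ht3⟩ : ∃ t, lucas d = t + 3 := ⟨lucas d - 3, by omega⟩
  obtain ⟨u3, hu3⟩ : ∃ u, Nat.fib (2 + d) = u + 3 := ⟨Nat.fib (2+d) - 3, by omega⟩
  have hE := Ekey hde (by omega) hm2
  set S := ∑ i ∈ Finset.Ioc 1 (m-1), bb d i with hS
  -- decompose the total sum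
  have hdec : ∑ k ∈ Finset.Ioc 0 m, ε k * bb d k
      = (∑ k ∈ Finset.Ioc 0 (m-1), ε k * bb d k) + ε m * bb d m := by
    rw [sum_split _ (show 0 ≤ m - 1 by omega) (show m - 1 ≤ m by omega),
        Ioc_single _ (show 1 ≤ m by omega)]
  have hemA : ε m = lucas d - 1 ∨ ε m ≠ lucas d - 1 := em _
  by_cases hem : ε m = lucas d - 1
  · -- top digit is A
    by_cases hex : ∃ k, 2 ≤ k ∧ k ≤ m - 1 ∧ ε k ≤ lucas d - 1 - 2
    · -- there is a small digit below; take the greatest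
      classical
      set Q : ℕ → Prop := fun k => 2 ≤ k ∧ ε k ≤ lucas d - 1 - 2 with hQdef
      obtain ⟨k, hk2, hkm, hkv⟩ := hex
      have hQk : Q (Nat.findGreatest Q (m-1)) := Nat.findGreatest_spec hkm ⟨hk2, hkv⟩
      set k0 := Nat.findGreatest Q (m-1) with hk0def
      have hk0m : k0 ≤ m - 1 := Nat.findGreatest_le _
      have hk02 : 2 ≤ k0 := hQk.1
      have hmax : ∀ i, k0 < i → i ≤ m-1 → ¬ Q i :=
        fun i hi1 hi2 => Nat.findGreatest_is_greatest hi1 hi2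
      have hmid : ∀ i, k0 < i → i ≤ m-1 → ε i = lucas d - 2 := by
        intro i hi1 hi2
        have hnQ := hmax i hi1 hi2
        have hub := h4 i (by omega)
        have hge : lucas d - 2 ≤ ε i := by
          by_contra hcon
          exact hnQ ⟨by omega, by omega⟩
        rcases Nat.lt_or_ge (ε i) (lucas d - 1) with h | h
        · omega
        · exfalso
          have hiA : ε i = lucas d - 1 := by omega
          obtain ⟨c, hc1, hc2, hc3⟩ := h3 i m (by omega) (by omega) hiA hem
          refine hmax c (by omega) (by omega) ⟨by omega, ?_⟩
          exact hc3
      -- split the prefix sum at k0-1, k0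
      have hdec2 : ∑ k ∈ Finset.Ioc 0 (m-1), ε k * bb d k
          = (∑ k ∈ Finset.Ioc 0 (k0-1), ε k * bb d k) + ε k0 * bb d k0
            + ∑ k ∈ Finset.Ioc k0 (m-1), ε k * bb d k := by
        rw [sum_split _ (show 0 ≤ k0 by omega) hk0m,
            sum_split _ (show 0 ≤ k0 - 1 by omega) (show k0 - 1 ≤ k0 by omega),
            Ioc_single _ (show 1 ≤ k0 by omega)]
      have hmidsum : ∑ k ∈ Finset.Ioc k0 (m-1), ε k * bb d k
          = (t3 + 1) * ∑ k ∈ Finset.Ioc k0 (m-1), bb d k := by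
        rw [Finset.mul_sum]
        refine Finset.sum_congr rfl (fun i hi => ?_)
        simp only [Finset.mem_Ioc] at hi
        rw [show ε i = t3 + 1 from by have := hmid i hi.1 hi.2; omega]
      have hpre : (∑ k ∈ Finset.Ioc 0 (k0-1), ε k * bb d k) + 1 ≤ bb d k0 := by
        have := prefix_le (k0 - 1) (by omega)
        rwa [show k0 - 1 + 1 = k0 by omega] at this
      have hX : bb d k0 + (∑ k ∈ Finset.Ioc k0 (m-1), bb d k)
          = ∑ k ∈ Finset.Ioc (k0-1) (m-1), bb d k := by
        rw [sum_split _ (show k0-1 ≤ k0 by omega) hk0m, Ioc_single _ (show 1 ≤ k0 by omega)]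
      have hXS : ∑ k ∈ Finset.Ioc (k0-1) (m-1), bb d k ≤ S :=
        Finset.sum_le_sum_of_subset (Finset.Ioc_subset_Ioc (by omega) le_rfl)
      have hmul : (t3+1) * (∑ k ∈ Finset.Ioc (k0-1) (m-1), bb d k) ≤ (t3+1) * S :=
        Nat.mul_le_mul_left _ hXS
      have hk0v : ε k0 * bb d k0 ≤ t3 * bb d k0 :=
        Nat.mul_le_mul_right _ (by have := hQk.2; omega)
      have hem' : ε m = t3 + 2 := by omega
      rw [hdec, hdec2, hmidsum, hem']
      rw [ht3, hu3] at hE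
      have hbbpos := bb_pos d k0
      set T := ∑ k ∈ Finset.Ioc k0 (m-1), bb d k
      have hX2 : t3 * bb d k0 + t3 * T = t3 * ∑ k ∈ Finset.Ioc (k0-1) (m-1), bb d k := by
        rw [← hX, Nat.mul_add]
      ring_nf at hE hmul hX hX2 hpre hk0v ⊢
      linarith [hpre, hk0v, hmul, hX, hX2, hE]
    · -- all middle digits are A-1
      push_neg at hex
      have hall : ∀ i, 2 ≤ i → i ≤ m-1 → ε i = lucas d - 2 := by
        intro i hi1 hi2
        have hub := h4 i hi1
        have hge : lucas d - 2 ≤ ε i := by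
          have := hex i hi1 hi2
          omega
        rcases Nat.lt_or_ge (ε i) (lucas d - 1) with h | h
        · omega
        · exfalso
          have hiA : ε i = lucas d - 1 := by omega
          obtain ⟨c, hc1, hc2, hc3⟩ := h3 i m hi1 (by omega) hiA hem
          have := hex c (by omega) (by omega)
          omega
      have h1' : ε 1 < Nat.fib (2+d) - 1 :=
        h2 m (by omega) hem (fun k hk1 hk2 => by rw [hall k hk1 hk2]; omega)
      have hdec2 : ∑ k ∈ Finset.Ioc 0 (m-1), ε k * bb d k
          = ε 1 * bb d 1 + ∑ k ∈ Finset.Ioc 1 (m-1), ε k * bb d k := by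
        have h01 : Finset.Ioc 0 1 = {1} := by
          ext x; simp only [Finset.mem_Ioc, Finset.mem_singleton]; omega
        rw [sum_split _ (show 0 ≤ 1 by omega) (show 1 ≤ m - 1 by omega), h01,
          Finset.sum_singleton]
      have hmidsum : ∑ k ∈ Finset.Ioc 1 (m-1), ε k * bb d k = (t3 + 1) * S := by
        rw [hS, Finset.mul_sum]
        refine Finset.sum_congr rfl (fun i hi => ?_)
        simp only [Finset.mem_Ioc] at hi
        rw [show ε i = t3 + 1 from by have := hall i (by omega) hi.2; omega]
      have hem' : ε m = t3 + 2 := by omega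
      rw [hdec, hdec2, hmidsum, hem', bb_one]
      rw [ht3, hu3] at hE
      have h1'' : ε 1 ≤ u3 + 1 := by omega
      ring_nf at hE ⊢
      linarith [hE, h1'']
  · -- top digit ≤ A-1
    have hub : ε m ≤ t3 + 1 := by have := h4 m (by omega); omega
    have hpre : (∑ k ∈ Finset.Ioc 0 (m-1), ε k * bb d k) + 1 ≤ bb d m := by
      have := prefix_le (m-1) (by omega)
      rwa [show m - 1 + 1 = m by omega] at this
    have hmv : ε m * bb d m ≤ (t3+1) * bb d m := Nat.mul_le_mul_right _ hub
    have hSmul : 3 * S ≤ lucas d * S := Nat.mul_le_mul_right _ hL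
    rw [hdec]
    rw [ht3, hu3] at hE
    rw [ht3] at hSmul
    ring_nf at hE hSmul hpre hmv ⊢
    linarith [hpre, hmv, hE, hSmul]

lemma CGRule.bound {d : ℕ} {ε : ℕ → ℕ} (h : CGRule d ε) : ∃ N, ∀ k, N < k → ε k = 0 := by
  obtain ⟨N, hN⟩ := h.2.1.bddAbove
  refine ⟨N, fun k hk => ?_⟩
  by_contra hne
  have := hN (show k ∈ {k | ε k ≠ 0} from hne)
  omega

lemma val_eq {d : ℕ} {ε : ℕ → ℕ} (h0 : ε 0 = 0) {N : ℕ} (hN : ∀ k, N < k → ε k = 0) :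
    ∑ᶠ k, ε k * Nat.fib (2 + d * (k-1)) = ∑ k ∈ Finset.Ioc 0 N, ε k * bb d k := by
  apply finsum_eq_sum_of_support_subset
  intro x hx
  simp only [Function.mem_support] at hx
  simp only [Finset.coe_Ioc, Set.mem_Ioc]
  constructor
  · rcases Nat.eq_zero_or_pos x with h | h
    · exfalso; apply hx; rw [h, h0]; ring
    · exact h
  · by_contra hc
    exact hx (by rw [hN x (by omega)]; ring)

lemma prefix_bound {d : ℕ} (hde : Even d) (hd2 : 2 ≤ d) {ε : ℕ → ℕ} (hε : CGRule d ε)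
    (t : ℕ) : (∑ k ∈ Finset.Ioc 0 t, ε k * bb d k) + 1 ≤ bb d (t+1) := by
  have htr := hε.trunc hd2 t
  have hIH := lemmaM hde hd2 t _ htr (fun k hk => by simp [show ¬ k ≤ t by omega])
  have heq : (∑ k ∈ Finset.Ioc 0 t, (if k ≤ t then ε k else 0) * bb d k)
      = ∑ k ∈ Finset.Ioc 0 t, ε k * bb d k := by
    refine Finset.sum_congr rfl (fun k hk => ?_)
    simp only [Finset.mem_Ioc] at hk
    simp [show k ≤ t by omega]
  rwa [heq] at hIH

lemma val_lt {d : ℕ} (hde : Even d) (hd2 : 2 ≤ d) {ε τ : ℕ → ℕ}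
    (hε : CGRule d ε) (hτ : CGRule d τ) {ℓ : ℕ}
    (hlt : ε ℓ < τ ℓ) (hagree : ∀ k, ℓ < k → ε k = τ k)
    {N : ℕ} (hN : ℓ ≤ N) :
    ∑ k ∈ Finset.Ioc 0 N, ε k * bb d k < ∑ k ∈ Finset.Ioc 0 N, τ k * bb d k := by
  have hl1 : 1 ≤ ℓ := by
    rcases Nat.eq_zero_or_pos ℓ with h | h
    · exfalso; rw [h, hε.1, hτ.1] at hlt; omega
    · exact h
  have hdecε : ∑ k ∈ Finset.Ioc 0 N, ε k * bb d k
      = (∑ k ∈ Finset.Ioc 0 (ℓ-1), ε k * bb d k) + ε ℓ * bb d ℓ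
        + ∑ k ∈ Finset.Ioc ℓ N, ε k * bb d k := by
    rw [sum_split _ (show 0 ≤ ℓ by omega) hN,
        sum_split _ (show 0 ≤ ℓ - 1 by omega) (show ℓ - 1 ≤ ℓ by omega),
        Ioc_single _ hl1]
  have hdecτ : ∑ k ∈ Finset.Ioc 0 N, τ k * bb d k
      = (∑ k ∈ Finset.Ioc 0 (ℓ-1), τ k * bb d k) + τ ℓ * bb d ℓ
        + ∑ k ∈ Finset.Ioc ℓ N, τ k * bb d k := by
    rw [sum_split _ (show 0 ≤ ℓ by omega) hN,
        sum_split _ (show 0 ≤ ℓ - 1 by omega) (show ℓ - 1 ≤ ℓ by omega),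
        Ioc_single _ hl1]
  have htail : ∑ k ∈ Finset.Ioc ℓ N, ε k * bb d k = ∑ k ∈ Finset.Ioc ℓ N, τ k * bb d k := by
    refine Finset.sum_congr rfl (fun k hk => ?_)
    simp only [Finset.mem_Ioc] at hk
    rw [hagree k hk.1]
  have hpre : (∑ k ∈ Finset.Ioc 0 (ℓ-1), ε k * bb d k) + 1 ≤ bb d ℓ := by
    have := prefix_bound hde hd2 hε (ℓ-1)
    rwa [show ℓ - 1 + 1 = ℓ by omega] at this
  have hmul : (ε ℓ + 1) * bb d ℓ ≤ τ ℓ * bb d ℓ := Nat.mul_le_mul_right _ (by omega)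
  rw [hdecε, hdecτ, htail]
  have hexp : (ε ℓ + 1) * bb d ℓ = ε ℓ * bb d ℓ + bb d ℓ := by ring
  omega

lemma cg_unique {d : ℕ} (hde : Even d) (hd2 : 2 ≤ d) {ε τ : ℕ → ℕ} {n : ℕ}
    (hε : CGRule d ε) (hτ : CGRule d τ)
    (he : ∑ᶠ k, ε k * Nat.fib (2 + d * (k-1)) = n)
    (ht : ∑ᶠ k, τ k * Nat.fib (2 + d * (k-1)) = n) : ε = τ := by
  by_contra hne
  have hD : {k | ε k ≠ τ k}.Finite := by
    apply (hε.2.1.union hτ.2.1).subset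
    intro k hk
    simp only [Set.mem_setOf_eq, Set.mem_union] at hk ⊢
    by_contra hc
    push_neg at hc
    exact hk (by rw [hc.1, hc.2])
  have hne' : {k | ε k ≠ τ k}.Nonempty := by
    rcases Function.ne_iff.1 hne with ⟨k, hk⟩
    exact ⟨k, hk⟩
  have hFne : hD.toFinset.Nonempty :=
    ⟨hne'.choose, (Set.Finite.mem_toFinset hD).2 hne'.choose_spec⟩
  set ℓ := hD.toFinset.max' hFne with hℓ
  have hℓD : ε ℓ ≠ τ ℓ := (Set.Finite.mem_toFinset hD).1 (hD.toFinset.max'_mem hFne)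
  have hagree : ∀ k, ℓ < k → ε k = τ k := by
    intro k hk
    by_contra hc
    have := hD.toFinset.le_max' k ((Set.Finite.mem_toFinset hD).2 hc)
    omega
  obtain ⟨N1, hN1⟩ := hε.bound
  obtain ⟨N2, hN2⟩ := hτ.bound
  set N := max ℓ (max N1 N2) with hNdef
  have hεN : ∀ k, N < k → ε k = 0 := fun k hk => hN1 k (by omega)
  have hτN : ∀ k, N < k → τ k = 0 := fun k hk => hN2 k (by omega)
  have he' : ∑ k ∈ Finset.Ioc 0 N, ε k * bb d k = n := by rw [← val_eq hε.1 hεN, he]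
  have ht' : ∑ k ∈ Finset.Ioc 0 N, τ k * bb d k = n := by rw [← val_eq hτ.1 hτN, ht]
  rcases lt_trichotomy (ε ℓ) (τ ℓ) with h | h | h
  · have := val_lt hde hd2 hε hτ h hagree (N := N) (by omega)
    omega
  · exact hℓD h
  · have := val_lt hde hd2 hτ hε h (fun k hk => (hagree k hk).symm) (N := N) (by omega)
    omega

lemma sum_head (f : ℕ → ℕ) {N : ℕ} (hN : 1 ≤ N) :
    ∑ k ∈ Finset.Ioc 0 N, f k = f 1 + ∑ k ∈ Finset.Ioc 1 N, f k := by
  have h01 : Finset.Ioc 0 1 = {1} := by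
    ext x; simp only [Finset.mem_Ioc, Finset.mem_singleton]; omega
  rw [sum_split f (show (0:ℕ) ≤ 1 by omega) hN, h01, Finset.sum_singleton]

lemma sum_head2 (f : ℕ → ℕ) {N : ℕ} (hN : 2 ≤ N) :
    ∑ k ∈ Finset.Ioc 0 N, f k = f 1 + f 2 + ∑ k ∈ Finset.Ioc 2 N, f k := by
  rw [sum_head f (show 1 ≤ N by omega), sum_split f (show (1:ℕ) ≤ 2 by omega) hN]
  have h12 : Finset.Ioc 1 2 = {2} := by
    ext x; simp only [Finset.mem_Ioc, Finset.mem_singleton]; omega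
  rw [h12, Finset.sum_singleton]
  ring

lemma cg_increment {d : ℕ} (hde : Even d) (hd2 : 2 ≤ d) {ε : ℕ → ℕ} (hε : CGRule d ε) :
    ∃ τ : ℕ → ℕ, CGRule d τ ∧
      ∑ᶠ k, τ k * Nat.fib (2 + d * (k-1))
        = (∑ᶠ k, ε k * Nat.fib (2 + d * (k-1))) + 1 := by
  classical
  have hL := hL3 hd2
  have hF := hF3 hd2
  obtain ⟨t3, ht3⟩ : ∃ t, lucas d = t + 3 := ⟨lucas d - 3, by omega⟩
  obtain ⟨u3, hu3⟩ : ∃ u, Nat.fib (2 + d) = u + 3 := ⟨Nat.fib (2+d) - 3, by omega⟩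
  obtain ⟨h0, hfin, h1, h4, h2, h3⟩ := hε
  obtain ⟨N0, hN0⟩ := CGRule.bound ⟨h0, hfin, h1, h4, h2, h3⟩
  set P : Prop := ∃ m, 2 ≤ m ∧ ε m = lucas d - 1 ∧
      (∀ k, 2 ≤ k → k ≤ m - 1 → ε k = lucas d - 2) with hPdef
  by_cases hP : P
  · obtain ⟨m, hm2, hmA, hmall⟩ := hP
    have h1lt : ε 1 < Nat.fib (2+d) - 1 :=
      h2 m hm2 hmA (fun k hk1 hk2 => by rw [hmall k hk1 hk2]; omega)
    by_cases hc : ε 1 + 1 < Nat.fib (2+d) - 1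
    · -- CASE I (with pattern): just increment ε 1
      refine ⟨Function.update ε 1 (ε 1 + 1), ⟨?_, ?_, ?_, ?_, ?_, ?_⟩, ?_⟩
      · simp [Function.update, h0]
      · apply (hfin.union (Set.finite_singleton 1)).subset
        intro k hk
        simp only [Set.mem_setOf_eq] at hk
        by_cases hk1 : k = 1
        · simp [hk1]
        · simp only [Function.update, hk1] at hk
          left; simpa using hk
      · simp only [Function.update_self]; omega
      · intro k hk
        rw [Function.update_of_ne (show k ≠ 1 by omega)]
        exact h4 k hk
      · intro m' hm' hmA' hall'
        simp only [Function.update_self]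
        omega
      · intro k j hk hkj hkA hjA
        rw [Function.update_of_ne (show k ≠ 1 by omega)] at hkA
        rw [Function.update_of_ne (show j ≠ 1 by omega)] at hjA
        obtain ⟨c, hc1, hc2, hc3⟩ := h3 k j hk hkj hkA hjA
        exact ⟨c, hc1, hc2, by rw [Function.update_of_ne (show c ≠ 1 by omega)]; exact hc3⟩
      · -- value
        set τ := Function.update ε 1 (ε 1 + 1) with hτ
        have hτ0 : τ 0 = 0 := by simp [hτ, Function.update, h0]
        have hτN : ∀ k, N0 + 1 < k → τ k = 0 := fun k hk => by
          rw [hτ, Function.update_of_ne (show k ≠ 1 by omega)]; exact hN0 k (by omega)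
        rw [val_eq hτ0 hτN, val_eq h0 (N := N0 + 1) (fun k hk => hN0 k (by omega))]
        rw [sum_head _ (show 1 ≤ N0 + 1 by omega), sum_head _ (show 1 ≤ N0 + 1 by omega)]
        have htail : ∑ k ∈ Finset.Ioc 1 (N0+1), τ k * bb d k
            = ∑ k ∈ Finset.Ioc 1 (N0+1), ε k * bb d k := by
          refine Finset.sum_congr rfl (fun k hk => ?_)
          simp only [Finset.mem_Ioc] at hk
          rw [hτ, Function.update_of_ne (show k ≠ 1 by omega)]
        rw [htail, hτ, Function.update_self, bb_one]
        ring
    · -- CASE III: ε 1 = B - 1, pattern at m; zero out 1..m, carry into m+1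
      have h1v : ε 1 = Nat.fib (2+d) - 2 := by omega
      have hm1A : ε (m+1) ≤ lucas d - 2 := by
        have hub := h4 (m+1) (by omega)
        rcases Nat.lt_or_ge (ε (m+1)) (lucas d - 1) with h | h
        · omega
        · exfalso
          obtain ⟨c, hc1, hc2, _⟩ := h3 m (m+1) hm2 (by omega) hmA (by omega)
          omega
      refine ⟨fun k => if k ≤ m then 0 else if k = m+1 then ε (m+1) + 1 else ε k,
        ⟨?_, ?_, ?_, ?_, ?_, ?_⟩, ?_⟩
      · simp [show 0 ≤ m by omega]
      · apply (hfin.union (Set.finite_singleton (m+1))).subset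
        intro k hk
        simp only [Set.mem_setOf_eq] at hk
        by_cases hkm : k ≤ m
        · simp [hkm] at hk
        · by_cases hkm1 : k = m+1
          · simp [hkm1]
          · simp only [hkm, hkm1, if_neg, if_false] at hk
            left; simpa using hk
      · simp [show 1 ≤ m by omega]
      · intro k hk
        by_cases hkm : k ≤ m
        · simp [hkm]
        · by_cases hkm1 : k = m+1
          · simp [hkm1, show ¬ (m+1 ≤ m) by omega]; omega
          · simp [hkm, hkm1]; exact h4 k hk
      · intro m' hm' hmA' hall'
        simp only [show (1:ℕ) ≤ m by omega, if_pos]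
        omega
      · intro k j hk hkj hkA hjA
        have hkgt : ¬ k ≤ m := by
          by_contra hc'
          simp only [hc', if_pos] at hkA
          omega
        have hjgt : ¬ j ≤ m := by omega
        by_cases hkm1 : k = m+1
        · -- new top digit is A; use old pair (m, j)
          have hjm1 : j ≠ m+1 := by omega
          have hjA' : ε j = lucas d - 1 := by simpa [hjgt, hjm1] using hjA
          obtain ⟨c, hc1, hc2, hc3⟩ := h3 m j hm2 (by omega) hmA hjA'
          have hcm1 : c ≠ m+1 := by
            intro hceq
            rw [hceq] at hc3
            have : ε (m+1) + 1 = lucas d - 1 := by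
              simpa [hkm1, show ¬ (m+1 ≤ m) by omega] using hkA
            omega
          refine ⟨c, by omega, hc2, ?_⟩
          simpa [show ¬ c ≤ m by omega, hcm1] using hc3
        · have hjm1 : j ≠ m+1 := by omega
          have hkA' : ε k = lucas d - 1 := by simpa [hkgt, hkm1] using hkA
          have hjA' : ε j = lucas d - 1 := by simpa [hjgt, hjm1] using hjA
          obtain ⟨c, hc1, hc2, hc3⟩ := h3 k j hk hkj hkA' hjA'
          refine ⟨c, hc1, hc2, ?_⟩
          simpa [show ¬ c ≤ m by omega, show c ≠ m+1 by omega] using hc3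
      · -- value computation for case III
        set τ : ℕ → ℕ := fun k => if k ≤ m then 0 else if k = m+1 then ε (m+1) + 1 else ε k
          with hτ
        have hτ0 : τ 0 = 0 := by simp [hτ, show 0 ≤ m by omega]
        have hτN : ∀ k, N0 + m + 2 < k → τ k = 0 := fun k hk => by
          simp only [hτ, show ¬ k ≤ m by omega, show k ≠ m+1 by omega, if_neg, if_false]
          exact hN0 k (by omega)
        rw [val_eq hτ0 hτN, val_eq h0 (N := N0 + m + 2) (fun k hk => hN0 k (by omega))]
        set N := N0 + m + 2 with hNdef
        have hsm1 : ∀ f : ℕ → ℕ, ∑ k ∈ Finset.Ioc m (m+1), f k = f (m+1) := fun f => by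
          have := Ioc_single f (b := m+1) (by omega)
          simpa [show m + 1 - 1 = m by omega] using this
        have hdec : ∀ f : ℕ → ℕ, ∑ k ∈ Finset.Ioc 0 N, f k
            = f 1 + (∑ k ∈ Finset.Ioc 1 (m-1), f k) + f m
              + f (m+1) + ∑ k ∈ Finset.Ioc (m+1) N, f k := by
          intro f
          rw [sum_head _ (show 1 ≤ N by omega),
              sum_split _ (show (1:ℕ) ≤ m - 1 by omega) (show m - 1 ≤ N by omega),
              sum_split _ (show m - 1 ≤ m by omega) (show m ≤ N by omega),
              sum_split _ (show m ≤ m + 1 by omega) (show m + 1 ≤ N by omega),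
              Ioc_single _ (show 1 ≤ m by omega), hsm1]
          ring
        rw [hdec, hdec]
        have e1 : τ 1 * bb d 1 = 0 := by simp [hτ, show 1 ≤ m by omega]
        have e2 : ∑ k ∈ Finset.Ioc 1 (m-1), τ k * bb d k = 0 := by
          apply Finset.sum_eq_zero
          intro k hk
          simp only [Finset.mem_Ioc] at hk
          simp [hτ, show k ≤ m by omega]
        have e3 : τ m * bb d m = 0 := by simp [hτ]
        have e4 : τ (m+1) = ε (m+1) + 1 := by
          simp [hτ, show ¬ (m+1 ≤ m) by omega]
        have e5 : ∑ k ∈ Finset.Ioc (m+1) N, τ k * bb d k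
            = ∑ k ∈ Finset.Ioc (m+1) N, ε k * bb d k := by
          refine Finset.sum_congr rfl (fun k hk => ?_)
          simp only [Finset.mem_Ioc] at hk
          simp [hτ, show ¬ k ≤ m by omega, show k ≠ m+1 by omega]
        have e6 : ∑ k ∈ Finset.Ioc 1 (m-1), ε k * bb d k
            = (t3+1) * ∑ i ∈ Finset.Ioc 1 (m-1), bb d i := by
          rw [Finset.mul_sum]
          refine Finset.sum_congr rfl (fun i hi => ?_)
          simp only [Finset.mem_Ioc] at hi
          rw [show ε i = t3 + 1 from by have := hmall i (by omega) (by omega); omega]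
        have e7 : ε m = t3 + 2 := by omega
        have e8 : ε 1 = u3 + 1 := by omega
        have hE := Ekey hde (show 0 < d by omega) hm2
        rw [ht3, hu3] at hE
        rw [e1, e2, e3, e4, e5, e6, e7, e8, bb_one]
        ring_nf at hE ⊢
        linarith [hE]
  · -- no pattern
    by_cases hc : ε 1 + 1 ≤ Nat.fib (2+d) - 1
    · -- CASE I (no pattern)
      refine ⟨Function.update ε 1 (ε 1 + 1), ⟨?_, ?_, ?_, ?_, ?_, ?_⟩, ?_⟩
      · simp [Function.update, h0]
      · apply (hfin.union (Set.finite_singleton 1)).subset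
        intro k hk
        simp only [Set.mem_setOf_eq] at hk
        by_cases hk1 : k = 1
        · simp [hk1]
        · simp only [Function.update, hk1] at hk
          left; simpa using hk
      · simp only [Function.update_self]; omega
      · intro k hk
        rw [Function.update_of_ne (show k ≠ 1 by omega)]
        exact h4 k hk
      · intro m' hm' hmA' hall'
        exfalso
        apply hP
        rw [Function.update_of_ne (show m' ≠ 1 by omega)] at hmA'
        refine ⟨m', hm', hmA', fun k hk1 hk2 => ?_⟩
        have := hall' k hk1 hk2
        rw [Function.update_of_ne (show k ≠ 1 by omega)] at this
        omega
      · intro k j hk hkj hkA hjA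
        rw [Function.update_of_ne (show k ≠ 1 by omega)] at hkA
        rw [Function.update_of_ne (show j ≠ 1 by omega)] at hjA
        obtain ⟨c, hc1, hc2, hc3⟩ := h3 k j hk hkj hkA hjA
        exact ⟨c, hc1, hc2, by rw [Function.update_of_ne (show c ≠ 1 by omega)]; exact hc3⟩
      · set τ := Function.update ε 1 (ε 1 + 1) with hτ
        have hτ0 : τ 0 = 0 := by simp [hτ, Function.update, h0]
        have hτN : ∀ k, N0 + 1 < k → τ k = 0 := fun k hk => by
          rw [hτ, Function.update_of_ne (show k ≠ 1 by omega)]; exact hN0 k (by omega)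
        rw [val_eq hτ0 hτN, val_eq h0 (N := N0 + 1) (fun k hk => hN0 k (by omega))]
        rw [sum_head _ (show 1 ≤ N0 + 1 by omega), sum_head _ (show 1 ≤ N0 + 1 by omega)]
        have htail : ∑ k ∈ Finset.Ioc 1 (N0+1), τ k * bb d k
            = ∑ k ∈ Finset.Ioc 1 (N0+1), ε k * bb d k := by
          refine Finset.sum_congr rfl (fun k hk => ?_)
          simp only [Finset.mem_Ioc] at hk
          rw [hτ, Function.update_of_ne (show k ≠ 1 by omega)]
        rw [htail, hτ, Function.update_self, bb_one]
        ring
    · -- CASE II: ε 1 = B, carry into position 2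
      have h1B : ε 1 = Nat.fib (2+d) - 1 := by omega
      have hε2 : ε 2 ≤ lucas d - 2 := by
        have hub := h4 2 (by omega)
        rcases Nat.lt_or_ge (ε 2) (lucas d - 1) with h | h
        · omega
        · exact absurd ⟨2, le_rfl, by omega, fun k hk1 hk2 => by omega⟩ hP
      refine ⟨fun k => if k = 1 then 0 else if k = 2 then ε 2 + 1 else ε k,
        ⟨?_, ?_, ?_, ?_, ?_, ?_⟩, ?_⟩
      · simp [h0]
      · apply (hfin.union (Set.finite_singleton 2)).subset
        intro k hk
        simp only [Set.mem_setOf_eq] at hk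
        by_cases hk1 : k = 1
        · simp [hk1] at hk
        · by_cases hk2 : k = 2
          · simp [hk2]
          · simp only [hk1, hk2, if_neg, if_false] at hk
            left; simpa using hk
      · simp
      · intro k hk
        by_cases hk2 : k = 2
        · simp [hk2]; omega
        · simp [show k ≠ 1 by omega, hk2]; exact h4 k hk
      · intro m' hm' hmA' hall'
        simp only [if_pos]
        omega
      · intro k j hk hkj hkA hjA
        have hjne1 : j ≠ 1 := by omega
        by_cases hk2 : k = 2
        · -- new digit at 2 is A
          subst hk2
          have hjne2 : j ≠ 2 := by omega
          have hjA' : ε j = lucas d - 1 := by simpa [hjne1, hjne2] using hjA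
          have he2 : ε 2 = lucas d - 2 := by
            have : ε 2 + 1 = lucas d - 1 := by simpa using hkA
            omega
          have hQex : ∃ i, 3 ≤ i ∧ ε i ≠ lucas d - 2 := by
            refine ⟨N0 + 3, by omega, ?_⟩
            rw [hN0 (N0+3) (by omega)]
            omega
          obtain ⟨t, ⟨ht3', htne⟩, hmin0⟩ :
              ∃ t, (3 ≤ t ∧ ε t ≠ lucas d - 2) ∧
                ∀ i, i < t → ¬(3 ≤ i ∧ ε i ≠ lucas d - 2) :=
            ⟨Nat.find hQex, Nat.find_spec hQex, fun i hi => Nat.find_min hQex hi⟩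
          have hmin : ∀ i, 3 ≤ i → i < t → ε i = lucas d - 2 := by
            intro i hi1 hi2
            by_contra hcon
            exact hmin0 i hi2 ⟨hi1, hcon⟩
          have htA : ε t ≠ lucas d - 1 := by
            intro hcon
            apply hP
            refine ⟨t, by omega, hcon, fun k hk1 hk2 => ?_⟩
            rcases Nat.lt_or_ge k 3 with h | h
            · have : k = 2 := by omega
              rw [this, he2]
            · exact hmin k h (by omega)
          have htle : ε t ≤ lucas d - 1 - 2 := by
            have := h4 t (by omega)
            omega
          have htjlt : t < j := by
            rcases Nat.lt_or_ge t j with h | h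
            · exact h
            · rcases Nat.eq_or_lt_of_le h with h' | h'
              · exact absurd (h' ▸ hjA') htA
              · exact absurd ⟨by omega, by omega⟩ (hmin0 j h')
          refine ⟨t, by omega, htjlt, ?_⟩
          simpa [show t ≠ 1 by omega, show t ≠ 2 by omega] using htle
        · have hkne1 : k ≠ 1 := by omega
          have hjne2 : j ≠ 2 := by omega
          have hkA' : ε k = lucas d - 1 := by simpa [hkne1, hk2] using hkA
          have hjA' : ε j = lucas d - 1 := by simpa [hjne1, hjne2] using hjA
          obtain ⟨c, hc1, hc2, hc3⟩ := h3 k j hk hkj hkA' hjA'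
          refine ⟨c, hc1, hc2, ?_⟩
          simpa [show c ≠ 1 by omega, show c ≠ 2 by omega] using hc3
      · -- value computation for case II
        set τ : ℕ → ℕ := fun k => if k = 1 then 0 else if k = 2 then ε 2 + 1 else ε k with hτ
        have hτ0 : τ 0 = 0 := by simp [hτ, h0]
        have hτN : ∀ k, N0 + 2 < k → τ k = 0 := fun k hk => by
          simp only [hτ, show k ≠ 1 by omega, show k ≠ 2 by omega, if_neg, if_false]
          exact hN0 k (by omega)
        rw [val_eq hτ0 hτN, val_eq h0 (N := N0 + 2) (fun k hk => hN0 k (by omega))]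
        rw [sum_head2 _ (show 2 ≤ N0 + 2 by omega), sum_head2 _ (show 2 ≤ N0 + 2 by omega)]
        have htail : ∑ k ∈ Finset.Ioc 2 (N0+2), τ k * bb d k
            = ∑ k ∈ Finset.Ioc 2 (N0+2), ε k * bb d k := by
          refine Finset.sum_congr rfl (fun k hk => ?_)
          simp only [Finset.mem_Ioc] at hk
          simp [hτ, show k ≠ 1 by omega, show k ≠ 2 by omega]
        have e1 : τ 1 * bb d 1 = 0 := by simp [hτ]
        have e2 : τ 2 = ε 2 + 1 := by simp [hτ]
        rw [htail, e1, e2, bb_one, bb_two, h1B, hu3]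
        ring_nf
        omega

lemma cg_exists {d : ℕ} (hde : Even d) (hd2 : 2 ≤ d) (n : ℕ) :
    ∃ ε : ℕ → ℕ, CGRule d ε ∧ ∑ᶠ k, ε k * Nat.fib (2 + d * (k-1)) = n := by
  induction n with
  | zero =>
      refine ⟨fun _ => 0, ⟨rfl, by simpa using Set.finite_empty, by simp, by simp,
        ?_, ?_⟩, by simp⟩
      · intro m hm hmA hall
        have := hF3 hd2
        simp only []
        omega
      · intro k j _ _ hkA _
        exfalso
        have := hL3 hd2
        simp only [] at hkA
        omega
  | succ n ih =>
      obtain ⟨ε, hε, hv⟩ := ih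
      obtain ⟨τ, hτ, hvt⟩ := cg_increment hde hd2 hε
      exact ⟨τ, hτ, by rw [hvt, hv]⟩

theorem stmt_10 (d : ℕ) (hd : 0 < d) (hde : Even d) (n : ℕ) (hn : 1 ≤ n) :
    ∃! ε : ℕ → ℕ, CGRule d ε ∧ n = ∑ᶠ k, ε k * Nat.fib (2 + d * (k - 1)) := by
  have hd2 : 2 ≤ d := by
    obtain ⟨e, rfl⟩ := hde
    omega
  obtain ⟨ε, hε, hval⟩ := cg_exists hde hd2 n
  refine ⟨ε, ⟨hε, hval.symm⟩, ?_⟩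
  rintro τ ⟨hτ, hvalτ⟩
  exact cg_unique hde hd2 hτ hε hvalτ.symm hval
end
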